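/- Suppose x_j w_j = 0 for all j ≠ j′ and x_{j′} ≠ 0, and A is twice differentiable with A'' > 0 everywhere. Then the Shakeout regularizer π(w), viewed as a function of w_{j′} on (0,∞) or (−∞,0), satisfies ∂π/∂w_{j′} > 0 for w_{j′} > 0 and ∂π/∂w_{j′} < 0 for w_{j′} < 0; i.e., π penalizes the magnitude of w_{j′}. -/

import Mathlib

open Finset

/-- Proposition 4(i): suppose `x j * w j = 0` for all `j ≠ j'`,
`x j' ≠ 0`, and `A` is twice differentiable with `A'' > 0` everywhere. Then the
Shakeout regularizer `π`, viewed as a function of the value `t` of `w j'`,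
has positive derivative for `t > 0` and negative derivative for `t < 0`. -/
theorem shakeout_regularizer_penalizes_magnitude (p : ℕ) (w x : Fin p → ℝ)
    (c τ : ℝ) (hc : 0 < c) (hτ : τ ∈ Set.Ioo (0:ℝ) 1)
    (j' : Fin p) (hzero : ∀ j, j ≠ j' → x j * w j = 0) (hx : x j' ≠ 0)
    (A A' A'' : ℝ → ℝ)
    (hA : ∀ t, HasDerivAt A (A' t) t)
    (hA' : ∀ t, HasDerivAt A' (A'' t) t)
    (hA'' : ∀ t, 0 < A'' t)
    (π : ℝ → ℝ)
    (hπ : ∀ t : ℝ, π t =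
      (fun (v : Fin p → ℝ) =>
        τ * ∑ j, A ((∑ i, v i * x i) - x j * (v j + c * Real.sign (v j)))
          + (1 - τ) * ∑ j, A ((∑ i, v i * x i)
              + τ / (1 - τ) * (x j * (v j + c * Real.sign (v j))))
          - (p : ℝ) * A (∑ i, v i * x i)) (Function.update w j' t)) :
    (∀ t : ℝ, 0 < t → ∃ d : ℝ, 0 < d ∧ HasDerivAt π d t) ∧
    (∀ t : ℝ, t < 0 → ∃ d : ℝ, d < 0 ∧ HasDerivAt π d t) := by
  obtain ⟨hτ0, hτ1⟩ := hτ
  have h1τ : (0:ℝ) < 1 - τ := by linarith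
  have hp : 0 < p := Fin.pos j'
  have hr : 0 < τ / (1 - τ) := div_pos hτ0 h1τ
  have hmono : StrictMono A' := by
    apply strictMono_of_deriv_pos
    intro u
    rw [(hA' u).deriv]
    exact hA'' u
  set s := x j' with hs
  have hcard : (((univ : Finset (Fin p)) \ {j'}).card : ℝ) = (p:ℝ) - 1 := by
    rw [Finset.card_sdiff_of_subset (by simp), Finset.card_univ, Fintype.card_fin,
      Finset.card_singleton, Nat.cast_sub hp]
    simp
  -- The key simplification of π
  have key : ∀ t' : ℝ, π t' =
      τ * A (t' * s - s * (t' + c * Real.sign t'))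
      + (1 - τ) * A (t' * s + τ / (1 - τ) * (s * (t' + c * Real.sign t')))
      - A (t' * s) := by
    intro t'
    rw [hπ]
    simp only
    set v := Function.update w j' t' with hv
    have hvj' : v j' = t' := Function.update_self _ _ _
    have hvj : ∀ j, j ≠ j' → v j = w j := fun j hj => Function.update_of_ne hj _ _
    have hsum : ∑ i, v i * x i = t' * s := by
      rw [Finset.sum_eq_single j']
      · rw [hvj']
      · intro i _ hi
        rw [hvj i hi, mul_comm]
        exact hzero i hi
      · simp
    have hq : ∀ j, j ≠ j' → x j * (v j + c * Real.sign (v j)) = 0 := by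
      intro j hj
      rw [hvj j hj]
      rcases eq_or_ne (w j) 0 with h | h
      · simp [h]
      · have hxj : x j = 0 := by
          rcases mul_eq_zero.1 (hzero j hj) with h' | h'
          · exact h'
          · exact absurd h' h
        simp [hxj]
    rw [hsum]
    have hsplit1 : ∑ j, A (t' * s - x j * (v j + c * Real.sign (v j)))
        = ((p:ℝ) - 1) * A (t' * s) + A (t' * s - s * (t' + c * Real.sign t')) := by
      rw [Finset.sum_eq_sum_sdiff_singleton_add (Finset.mem_univ j')]
      congr 1
      · have hconst : ∀ j ∈ (univ : Finset (Fin p)) \ {j'},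
            A (t' * s - x j * (v j + c * Real.sign (v j))) = A (t' * s) := by
          intro j hj
          have hj' : j ≠ j' := by simpa using (Finset.mem_sdiff.1 hj).2
          rw [hq j hj', sub_zero]
        rw [Finset.sum_congr rfl hconst, Finset.sum_const, nsmul_eq_mul, hcard]
      · rw [hvj']
    have hsplit2 : ∑ j, A (t' * s + τ / (1 - τ) * (x j * (v j + c * Real.sign (v j))))
        = ((p:ℝ) - 1) * A (t' * s)
          + A (t' * s + τ / (1 - τ) * (s * (t' + c * Real.sign t'))) := by
      rw [Finset.sum_eq_sum_sdiff_singleton_add (Finset.mem_univ j')]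
      congr 1
      · have hconst : ∀ j ∈ (univ : Finset (Fin p)) \ {j'},
            A (t' * s + τ / (1 - τ) * (x j * (v j + c * Real.sign (v j)))) = A (t' * s) := by
          intro j hj
          have hj' : j ≠ j' := by simpa using (Finset.mem_sdiff.1 hj).2
          rw [hq j hj', mul_zero, add_zero]
        rw [Finset.sum_congr rfl hconst, Finset.sum_const, nsmul_eq_mul, hcard]
      · rw [hvj']
    rw [hsplit1, hsplit2]
    ring
  constructor
  · -- t > 0
    intro t ht
    set a2 := t * s + τ / (1 - τ) * (s * (t + c * 1)) with ha2
    refine ⟨s * (A' a2 - A' (t * s)), ?_, ?_⟩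
    · have htc : 0 < t + c * 1 := by linarith
      rcases hx.lt_or_gt with hsneg | hspos
      · have hlt : a2 < t * s := by
          have : τ / (1 - τ) * (s * (t + c * 1)) < 0 :=
            mul_neg_of_pos_of_neg hr (mul_neg_of_neg_of_pos hsneg htc)
          rw [ha2]; linarith
        exact mul_pos_of_neg_of_neg hsneg (sub_neg.2 (hmono hlt))
      · have hlt : t * s < a2 := by
          have : 0 < τ / (1 - τ) * (s * (t + c * 1)) :=
            mul_pos hr (mul_pos hspos htc)
          rw [ha2]; linarith
        exact mul_pos hspos (sub_pos.2 (hmono hlt))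
    · -- derivative
      have h1 : HasDerivAt (fun u : ℝ => u * s) (1 * s) t := (hasDerivAt_id t).mul_const s
      have h2 : HasDerivAt (fun u : ℝ => s * (u + c * 1)) (s * 1) t :=
        ((hasDerivAt_id t).add_const (c * 1)).const_mul s
      have hin1 : HasDerivAt (fun u : ℝ => u * s - s * (u + c * 1)) (1 * s - s * 1) t :=
        h1.sub h2
      have hin2 : HasDerivAt (fun u : ℝ => u * s + τ / (1 - τ) * (s * (u + c * 1)))
          (1 * s + τ / (1 - τ) * (s * 1)) t := h1.add (h2.const_mul (τ / (1 - τ)))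
      have hG : HasDerivAt
          (fun u : ℝ => τ * A (u * s - s * (u + c * 1))
            + (1 - τ) * A (u * s + τ / (1 - τ) * (s * (u + c * 1)))
            - A (u * s))
          (τ * (A' (t * s - s * (t + c * 1)) * (1 * s - s * 1))
            + (1 - τ) * (A' a2 * (1 * s + τ / (1 - τ) * (s * 1)))
            - A' (t * s) * (1 * s)) t :=
        ((((hA _).comp t hin1).const_mul τ).add
          (((hA _).comp t hin2).const_mul (1 - τ))).sub ((hA _).comp t h1)
      have heq : π =ᶠ[nhds t] (fun u : ℝ => τ * A (u * s - s * (u + c * 1))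
          + (1 - τ) * A (u * s + τ / (1 - τ) * (s * (u + c * 1))) - A (u * s)) := by
        filter_upwards [Ioi_mem_nhds ht] with u hu
        rw [key u, Real.sign_of_pos hu]
      have hπd := hG.congr_of_eventuallyEq heq
      refine hπd.congr_deriv ?_
      rw [show (1 - τ) * (A' a2 * (1 * s + τ / (1 - τ) * (s * 1))) = A' a2 * s by linear_combination (A' a2 * s) * (mul_div_cancel₀ τ h1τ.ne' : (1 - τ) * (τ / (1 - τ)) = τ)]
      ring
  · -- t < 0
    intro t ht
    set a2 := t * s + τ / (1 - τ) * (s * (t + c * (-1))) with ha2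
    refine ⟨s * (A' a2 - A' (t * s)), ?_, ?_⟩
    · have htc : t + c * (-1) < 0 := by linarith
      rcases hx.lt_or_gt with hsneg | hspos
      · have hlt : t * s < a2 := by
          have : 0 < τ / (1 - τ) * (s * (t + c * (-1))) :=
            mul_pos hr (mul_pos_of_neg_of_neg hsneg htc)
          rw [ha2]; linarith
        exact mul_neg_of_neg_of_pos hsneg (sub_pos.2 (hmono hlt))
      · have hlt : a2 < t * s := by
          have : τ / (1 - τ) * (s * (t + c * (-1))) < 0 :=
            mul_neg_of_pos_of_neg hr (mul_neg_of_pos_of_neg hspos htc)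
          rw [ha2]; linarith
        exact mul_neg_of_pos_of_neg hspos (sub_neg.2 (hmono hlt))
    · have h1 : HasDerivAt (fun u : ℝ => u * s) (1 * s) t := (hasDerivAt_id t).mul_const s
      have h2 : HasDerivAt (fun u : ℝ => s * (u + c * (-1))) (s * 1) t :=
        ((hasDerivAt_id t).add_const (c * (-1))).const_mul s
      have hin1 : HasDerivAt (fun u : ℝ => u * s - s * (u + c * (-1))) (1 * s - s * 1) t :=
        h1.sub h2
      have hin2 : HasDerivAt (fun u : ℝ => u * s + τ / (1 - τ) * (s * (u + c * (-1))))
          (1 * s + τ / (1 - τ) * (s * 1)) t := h1.add (h2.const_mul (τ / (1 - τ)))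
      have hG : HasDerivAt
          (fun u : ℝ => τ * A (u * s - s * (u + c * (-1)))
            + (1 - τ) * A (u * s + τ / (1 - τ) * (s * (u + c * (-1))))
            - A (u * s))
          (τ * (A' (t * s - s * (t + c * (-1))) * (1 * s - s * 1))
            + (1 - τ) * (A' a2 * (1 * s + τ / (1 - τ) * (s * 1)))
            - A' (t * s) * (1 * s)) t :=
        ((((hA _).comp t hin1).const_mul τ).add
          (((hA _).comp t hin2).const_mul (1 - τ))).sub ((hA _).comp t h1)
      have heq : π =ᶠ[nhds t] (fun u : ℝ => τ * A (u * s - s * (u + c * (-1)))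
          + (1 - τ) * A (u * s + τ / (1 - τ) * (s * (u + c * (-1)))) - A (u * s)) := by
        filter_upwards [Iio_mem_nhds ht] with u hu
        rw [key u, Real.sign_of_neg hu]
      have hπd := hG.congr_of_eventuallyEq heq
      refine hπd.congr_deriv ?_
      rw [show (1 - τ) * (A' a2 * (1 * s + τ / (1 - τ) * (s * 1))) = A' a2 * s by linear_combination (A' a2 * s) * (mul_div_cancel₀ τ h1τ.ne' : (1 - τ) * (τ / (1 - τ)) = τ)]
      ring
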